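/- If V is a 2×2 unitary matrix satisfying V·Z·V† = ω·Z for some complex scalar ω with |ω| = 1, then there exist s ∈ {0,1}, a real α, and a unit complex scalar c such that V = c · X^s · Z^α, where Z^α := diag(1, e^{iπα}). -/

import Mathlib

open Matrix Complex

noncomputable section

def PX : Matrix (Fin 2) (Fin 2) ℂ := !![0, 1; 1, 0]
def PZ : Matrix (Fin 2) (Fin 2) ℂ := !![1, 0; 0, -1]

/-- `Z^α = diag(1, e^{iπα})`. -/
def Zpow (α : ℝ) : Matrix (Fin 2) (Fin 2) ℂ :=
  !![1, 0; 0, Complex.exp (Complex.I * (Real.pi * α))]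

-- auxiliary: exp(I*(π*(arg z / π))) = z when |z| = 1
lemma exp_arg_div_pi (z : ℂ) (hz : ‖z‖ = 1) :
    Complex.exp (Complex.I * ((Real.pi : ℂ) * ((z.arg / Real.pi : ℝ) : ℂ))) = z := by
  have h : ((Real.pi : ℂ) * ((z.arg / Real.pi : ℝ) : ℂ)) = (z.arg : ℂ) := by
    push_cast
    rw [mul_div_cancel₀ _ (by exact_mod_cast Real.pi_ne_zero : (Real.pi:ℂ) ≠ 0)]
  rw [h, mul_comm]
  have h2 := Complex.norm_mul_exp_arg_mul_I z
  rw [hz] at h2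
  simpa using h2

lemma abs_of_conj_mul (z : ℂ) (h : (starRingEnd ℂ) z * z = 1) : ‖z‖ = 1 := by
  have h2 : (Complex.normSq z : ℂ) = 1 := by rw [Complex.normSq_eq_conj_mul_self]; exact h
  have h3 : Complex.normSq z = 1 := by exact_mod_cast h2
  have h4 := Complex.sq_norm z
  nlinarith [norm_nonneg z]

theorem stmt6 (V : Matrix (Fin 2) (Fin 2) ℂ) (hV : Vᴴ * V = 1)
    (ω : ℂ) (hω : ‖ω‖ = 1) (hVZ : V * PZ * Vᴴ = ω • PZ) :
    ∃ s ∈ ({0, 1} : Set ℕ), ∃ α : ℝ, ∃ c : ℂ,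
      ‖c‖ = 1 ∧ V = c • (PX ^ s * Zpow α) := by
  have hVZ' : V * PZ = ω • (PZ * V) := by
    calc V * PZ = V * PZ * (Vᴴ * V) := by rw [hV, Matrix.mul_one]
    _ = (V * PZ * Vᴴ) * V := by simp only [Matrix.mul_assoc]
    _ = (ω • PZ) * V := by rw [hVZ]
    _ = ω • (PZ * V) := by rw [Matrix.smul_mul]
  have e00 := congrFun (congrFun hVZ' 0) 0
  have e01 := congrFun (congrFun hVZ' 0) 1
  have e10 := congrFun (congrFun hVZ' 1) 0
  have e11 := congrFun (congrFun hVZ' 1) 1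
  simp [Matrix.mul_apply, Matrix.vecMul, dotProduct, Fin.sum_univ_two, PZ, Matrix.smul_apply, Matrix.vecHead, Matrix.vecTail] at e00 e01 e10 e11
  have u00 := congrFun (congrFun hV 0) 0
  have u11 := congrFun (congrFun hV 1) 1
  simp [Matrix.mul_apply, Fin.sum_univ_two, Matrix.conjTranspose_apply, Matrix.one_apply] at u00 u11
  by_cases hω1 : ω = 1
  · subst hω1
    have hb : V 0 1 = 0 := by linear_combination (-1/2 : ℂ) * e01
    have hc : V 1 0 = 0 := by linear_combination (1/2 : ℂ) * e10
    rw [hc] at u00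
    rw [hb] at u11
    simp at u00 u11
    have ha : ‖V 0 0‖ = 1 := abs_of_conj_mul _ u00
    have hd : ‖V 1 1‖ = 1 := abs_of_conj_mul _ u11
    have ha0 : V 0 0 ≠ 0 := by
      intro h; rw [h] at ha; simp at ha
    have hz : ‖V 1 1 / V 0 0‖ = 1 := by
      rw [norm_div, ha, hd]; norm_num
    refine ⟨0, by simp, (V 1 1 / V 0 0).arg / Real.pi, V 0 0, ha, ?_⟩
    have he := exp_arg_div_pi _ hz
    push_cast at he
    ext i j
    fin_cases i <;> fin_cases j <;>
      simp [PX, Zpow, Matrix.mul_apply, Fin.sum_univ_two, Matrix.smul_apply, hb, hc]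
    rw [he]
    field_simp
  · -- ω ≠ 1
    have ha : V 0 0 = 0 := by
      rcases mul_eq_zero.mp (show (ω - 1) * V 0 0 = 0 by linear_combination -e00) with h | h
      · exact absurd (sub_eq_zero.mp h) hω1
      · exact h
    have hd : V 1 1 = 0 := by
      rcases mul_eq_zero.mp (show (ω - 1) * V 1 1 = 0 by linear_combination -e11) with h | h
      · exact absurd (sub_eq_zero.mp h) hω1
      · exact h
    rw [ha] at u00
    rw [hd] at u11
    simp at u00 u11
    have hcabs : ‖V 1 0‖ = 1 := abs_of_conj_mul _ u00
    have hbabs : ‖V 0 1‖ = 1 := abs_of_conj_mul _ u11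
    have hc0 : V 1 0 ≠ 0 := by
      intro h; rw [h] at hcabs; simp at hcabs
    have hz : ‖V 0 1 / V 1 0‖ = 1 := by
      rw [norm_div, hbabs, hcabs]; norm_num
    refine ⟨1, by simp, (V 0 1 / V 1 0).arg / Real.pi, V 1 0, hcabs, ?_⟩
    have he := exp_arg_div_pi _ hz
    push_cast at he
    ext i j
    fin_cases i <;> fin_cases j <;>
      simp [PX, Zpow, Matrix.mul_apply, Fin.sum_univ_two, Matrix.smul_apply, ha, hd]
    rw [he]
    field_simp
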